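/- Let β(x) be a formal power series and consider the fixed point equation x = g + t·β(x). Its unique formal power series solution in t with constant term g is x = g + Σ_{n≥1} (t^n/n!) f_n(g), where f_n(g) = (d/dg)^{n-1} [β(g)^n]. -/

import Mathlib

open PowerSeries Polynomial

noncomputable section FPEaux

abbrev Sq := PowerSeries (Polynomial ℚ)

def DgFun (f : Sq) : Sq := PowerSeries.mk fun n => Polynomial.derivative (PowerSeries.coeff n f)

@[simp] lemma coeff_DgFun (f : Sq) (n : ℕ) :
    PowerSeries.coeff n (DgFun f) = Polynomial.derivative (PowerSeries.coeff n f) :=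
  PowerSeries.coeff_mk _ _

lemma DgFun_mul (a b : Sq) : DgFun (a * b) = a * DgFun b + b * DgFun a := by
  ext n
  have swap : ∑ p ∈ Finset.HasAntidiagonal.antidiagonal n,
        Polynomial.derivative (PowerSeries.coeff p.1 a) * PowerSeries.coeff p.2 b
      = ∑ p ∈ Finset.HasAntidiagonal.antidiagonal n,
        PowerSeries.coeff p.1 b * Polynomial.derivative (PowerSeries.coeff p.2 a) := by
    conv_rhs => rw [← Finset.HasAntidiagonal.map_swap_antidiagonal, Finset.sum_map]
    exact Finset.sum_congr rfl fun p _ => by simp [mul_comm]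
  simp only [coeff_DgFun, map_add, PowerSeries.coeff_mul, coeff_DgFun]
  rw [map_sum]
  simp only [Polynomial.derivative_mul]
  rw [Finset.sum_add_distrib, swap, add_comm]

lemma DgFun_one : DgFun (1 : Sq) = 0 := by
  ext n
  rw [coeff_DgFun, PowerSeries.coeff_one]
  split <;> simp

noncomputable def Dg : Derivation ℚ Sq Sq where
  toFun := DgFun
  map_add' f g := by ext n; simp
  map_smul' q f := by ext n; simp
  map_one_eq_zero' := DgFun_one
  leibniz' a b := by simpa [smul_eq_mul] using DgFun_mul a b

@[simp] lemma coeff_Dg (f : Sq) (n : ℕ) :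
    PowerSeries.coeff n (Dg f) = Polynomial.derivative (PowerSeries.coeff n f) := coeff_DgFun f n

lemma Dg_C (p : Polynomial ℚ) : Dg (PowerSeries.C p) = PowerSeries.C (Polynomial.derivative p) := by
  ext n
  rw [coeff_Dg]
  cases n <;> simp

lemma Dg_X : Dg (PowerSeries.X : Sq) = 0 := by
  ext n
  rw [coeff_Dg, PowerSeries.coeff_X]
  split <;> simp

noncomputable def Dt : Derivation ℚ Sq Sq where
  toFun := PowerSeries.derivativeFun
  map_add' := PowerSeries.derivativeFun_add
  map_smul' q f := by
    ext n : 1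
    change PowerSeries.coeff n (d⁄dX _ (q • f)) = q • PowerSeries.coeff n (d⁄dX _ f)
    simp only [PowerSeries.coeff_derivativeFun, PowerSeries.coeff_smul, RingHom.id_apply,
      smul_eq_mul, smul_mul_assoc]
  map_one_eq_zero' := PowerSeries.derivativeFun_one
  leibniz' := PowerSeries.derivativeFun_mul

lemma coeff_Dt (f : Sq) (n : ℕ) :
    PowerSeries.coeff n (Dt f) = PowerSeries.coeff (n + 1) f * (n + 1) :=
  PowerSeries.coeff_derivativeFun f n

lemma Dt_C (p : Polynomial ℚ) : Dt (PowerSeries.C p) = 0 := PowerSeries.derivativeFun_C (r := p)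

lemma Dt_X : Dt (PowerSeries.X : Sq) = 1 := by
  ext n
  rw [coeff_Dt, PowerSeries.coeff_X, PowerSeries.coeff_one]
  split <;> simp_all

lemma Dt_Dg_comm (f : Sq) : Dt (Dg f) = Dg (Dt f) := by
  ext n
  rw [coeff_Dt, coeff_Dg, coeff_Dg, coeff_Dt, Polynomial.derivative_mul]
  simp

/-- Coefficients of powers only depend on lower coefficients. -/
lemma coeff_pow_congr (x y : Sq) (k : ℕ) (h : ∀ i ≤ k, PowerSeries.coeff i x = PowerSeries.coeff i y)
    (m : ℕ) : ∀ j ≤ k, PowerSeries.coeff j (x ^ m) = PowerSeries.coeff j (y ^ m) := by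
  induction m with
  | zero => intro j _; rfl
  | succ m ih =>
    intro j hj
    rw [pow_succ, pow_succ, PowerSeries.coeff_mul, PowerSeries.coeff_mul]
    refine Finset.sum_congr rfl fun p hp => ?_
    rw [Finset.HasAntidiagonal.mem_antidiagonal] at hp
    rw [ih p.1 (le_trans (le_trans (Nat.le_add_right _ _) hp.le) hj),
      h p.2 (le_trans (le_trans (Nat.le_add_left _ _) hp.le) hj)]

lemma coeff_aeval_congr (β : Polynomial ℚ) (x y : Sq) (k : ℕ)
    (h : ∀ i ≤ k, PowerSeries.coeff i x = PowerSeries.coeff i y) :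
    ∀ j ≤ k, PowerSeries.coeff j (Polynomial.aeval x β) = PowerSeries.coeff j (Polynomial.aeval y β) := by
  intro j hj
  rw [Polynomial.aeval_eq_sum_range, Polynomial.aeval_eq_sum_range, map_sum, map_sum]
  refine Finset.sum_congr rfl fun i _ => ?_
  rw [PowerSeries.coeff_smul, PowerSeries.coeff_smul, coeff_pow_congr x y k h i j hj]

end FPEaux
noncomputable section FPEmain

def fpIter (β : Polynomial ℚ) : ℕ → Sq
  | 0 => PowerSeries.C Polynomial.X
  | n + 1 => PowerSeries.C Polynomial.X + PowerSeries.X * Polynomial.aeval (fpIter β n) β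

lemma fpIter_stable (β : Polynomial ℚ) :
    ∀ n, ∀ i ≤ n, PowerSeries.coeff i (fpIter β (n + 1)) = PowerSeries.coeff i (fpIter β n) := by
  intro n
  induction n with
  | zero =>
    intro i hi
    interval_cases i
    simp [fpIter]
  | succ n ih =>
    intro i hi
    match i with
    | 0 => simp [fpIter]
    | j + 1 =>
      have hj : j ≤ n := Nat.lt_succ_iff.mp hi
      show PowerSeries.coeff (j+1) (fpIter β (n+2)) = PowerSeries.coeff (j+1) (fpIter β (n+1))
      conv_lhs => rw [show fpIter β (n+2) = PowerSeries.C Polynomial.X + PowerSeries.X * Polynomial.aeval (fpIter β (n+1)) β from rfl]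
      conv_rhs => rw [show fpIter β (n+1) = PowerSeries.C Polynomial.X + PowerSeries.X * Polynomial.aeval (fpIter β n) β from rfl]
      rw [map_add, map_add, PowerSeries.coeff_succ_X_mul, PowerSeries.coeff_succ_X_mul,
        coeff_aeval_congr β _ _ n ih j hj]

lemma fpIter_stable' (β : Polynomial ℚ) {m n : ℕ} (h : m ≤ n) :
    ∀ i ≤ m, PowerSeries.coeff i (fpIter β n) = PowerSeries.coeff i (fpIter β m) := by
  induction n, h using Nat.le_induction with
  | base => intro i _; rfl
  | succ n hmn ih =>
    intro i hi
    rw [fpIter_stable β n i (le_trans hi hmn), ih i hi]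

def fpSol (β : Polynomial ℚ) : Sq := PowerSeries.mk fun n => PowerSeries.coeff n (fpIter β n)

lemma coeff_fpSol (β : Polynomial ℚ) {i n : ℕ} (h : i ≤ n) :
    PowerSeries.coeff i (fpSol β) = PowerSeries.coeff i (fpIter β n) := by
  rw [fpSol, PowerSeries.coeff_mk, fpIter_stable' β h i le_rfl]

lemma fpSol_eq (β : Polynomial ℚ) :
    fpSol β = PowerSeries.C Polynomial.X + PowerSeries.X * Polynomial.aeval (fpSol β) β := by
  ext n
  match n with
  | 0 =>
    rw [coeff_fpSol β (le_refl 0)]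
    simp [fpIter]
  | j + 1 =>
    rw [coeff_fpSol β (le_refl (j+1)),
      show fpIter β (j+1) = PowerSeries.C Polynomial.X + PowerSeries.X * Polynomial.aeval (fpIter β j) β from rfl,
      map_add, map_add, PowerSeries.coeff_succ_X_mul, PowerSeries.coeff_succ_X_mul,
      coeff_aeval_congr β (fpIter β j) (fpSol β) j (fun i hi => (coeff_fpSol β hi).symm) j le_rfl]

lemma fp_unique (β : Polynomial ℚ) (x y : Sq)
    (hx : x = PowerSeries.C Polynomial.X + PowerSeries.X * Polynomial.aeval x β)
    (hy : y = PowerSeries.C Polynomial.X + PowerSeries.X * Polynomial.aeval y β) : x = y := by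
  suffices h : ∀ n, ∀ i ≤ n, PowerSeries.coeff i x = PowerSeries.coeff i y by
    exact PowerSeries.ext fun n => h n n le_rfl
  intro n
  induction n with
  | zero =>
    intro i hi
    interval_cases i
    rw [hx, hy]
    simp
  | succ n ih =>
    intro i hi
    match i with
    | 0 => rw [hx, hy]; simp
    | j + 1 =>
      have hj : j ≤ n := Nat.lt_succ_iff.mp hi
      rw [hx, hy, map_add, map_add, PowerSeries.coeff_succ_X_mul, PowerSeries.coeff_succ_X_mul,
        coeff_aeval_congr β x y n ih j hj]

end FPEmain
noncomputable section Lagrange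

lemma constantCoeff_Dt_iter (m : ℕ) (f : Sq) :
    PowerSeries.constantCoeff (Dt^[m] f) = m.factorial • PowerSeries.coeff m f := by
  induction m generalizing f with
  | zero => simp [PowerSeries.coeff_zero_eq_constantCoeff]
  | succ m ih =>
    rw [Function.iterate_succ_apply, ih, coeff_Dt, Nat.factorial_succ]
    simp only [nsmul_eq_mul]
    push_cast
    ring

lemma constantCoeff_Dg_iter (m : ℕ) (f : Sq) :
    PowerSeries.constantCoeff (Dg^[m] f) = Polynomial.derivative^[m] (PowerSeries.constantCoeff f) := by
  induction m generalizing f with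
  | zero => rfl
  | succ m ih =>
    rw [Function.iterate_succ_apply, ih, Function.iterate_succ_apply]
    congr 1
    rw [← PowerSeries.coeff_zero_eq_constantCoeff_apply, coeff_Dg,
      PowerSeries.coeff_zero_eq_constantCoeff_apply]

lemma constantCoeff_aeval (x : Sq) (β : Polynomial ℚ) :
    PowerSeries.constantCoeff (Polynomial.aeval x β)
      = Polynomial.aeval (PowerSeries.constantCoeff x) β := by
  rw [Polynomial.aeval_def, Polynomial.aeval_def, Polynomial.hom_eval₂]
  congr 1

section FixedPoint

variable (β : Polynomial ℚ) (x : Sq)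
  (hx : x = PowerSeries.C Polynomial.X + PowerSeries.X * Polynomial.aeval x β)

include hx

lemma fp_constantCoeff : PowerSeries.constantCoeff x = Polynomial.X := by
  conv_lhs => rw [hx]
  simp

lemma fp_Dg : (1 - PowerSeries.X * Polynomial.aeval x (Polynomial.derivative β)) * Dg x = 1 := by
  have h1 : Dg x = 1 + PowerSeries.X * (Polynomial.aeval x (Polynomial.derivative β) * Dg x) := by
    conv_lhs => rw [hx]
    rw [map_add, Dg_C, Polynomial.derivative_X, Dg.leibniz, Dg_X, Dg.map_aeval]
    simp only [smul_eq_mul, mul_zero, add_zero, map_one]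
  linear_combination h1

lemma fp_Dt : (1 - PowerSeries.X * Polynomial.aeval x (Polynomial.derivative β)) * Dt x
    = Polynomial.aeval x β := by
  have h1 : Dt x = Polynomial.aeval x β
      + PowerSeries.X * (Polynomial.aeval x (Polynomial.derivative β) * Dt x) := by
    conv_lhs => rw [hx]
    rw [map_add, Dt_C, Dt.leibniz, Dt_X, Dt.map_aeval]
    simp only [smul_eq_mul, mul_one]
    ring
  linear_combination h1

lemma fp_key0 : Dt x = Polynomial.aeval x β * Dg x := by
  have hu : IsUnit (1 - PowerSeries.X * Polynomial.aeval x (Polynomial.derivative β)) := by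
    rw [PowerSeries.isUnit_iff_constantCoeff]
    simp
  apply hu.mul_left_cancel
  rw [fp_Dt β x hx, ← mul_assoc, mul_comm _ (Polynomial.aeval x β), mul_assoc, fp_Dg β x hx,
    mul_one]

lemma fp_core (k : ℕ) :
    Dt (Polynomial.aeval x β ^ (k + 1) * Dg x)
      = Dg (Polynomial.aeval x β ^ (k + 2) * Dg x) := by
  set b := Polynomial.aeval x β with hb
  set b' := Polynomial.aeval x (Polynomial.derivative β) with hb'
  have hTb : Dt b = b' * (b * Dg x) := by
    rw [hb, Dt.map_aeval, smul_eq_mul, fp_key0 β x hx]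
  have hGb : Dg b = b' * Dg x := by
    rw [hb, Dg.map_aeval, smul_eq_mul]
  have hTG : Dt (Dg x) = b' * Dg x * Dg x + b * Dg (Dg x) := by
    rw [Dt_Dg_comm, fp_key0 β x hx, Dg.leibniz, hGb]
    simp only [smul_eq_mul]
    ring
  rw [Dt.leibniz, Dg.leibniz, Derivation.leibniz_pow, Derivation.leibniz_pow, hTb, hTG, hGb]
  simp only [smul_eq_mul, nsmul_eq_mul, Nat.add_sub_cancel]
  push_cast
  ring

lemma fp_key (n : ℕ) : Dt^[n + 1] x = Dg^[n] (Polynomial.aeval x β ^ (n + 1) * Dg x) := by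
  induction n with
  | zero => simpa using fp_key0 β x hx
  | succ n ih =>
    rw [Function.iterate_succ_apply', ih,
      (Function.Commute.iterate_right (fun f => Dt_Dg_comm f) n) _,
      fp_core β x hx n, ← Function.iterate_succ_apply (⇑Dg) n]

lemma fp_coeff (n : ℕ) (hn : 1 ≤ n) :
    PowerSeries.coeff n x
      = (n.factorial : ℚ)⁻¹ • (Polynomial.derivative^[n - 1] (β ^ n)) := by
  obtain ⟨m, rfl⟩ : ∃ m, n = m + 1 := ⟨n - 1, (Nat.succ_pred_eq_of_pos hn).symm⟩
  have h := congrArg (PowerSeries.constantCoeff (R := Polynomial ℚ)) (fp_key β x hx m)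
  rw [constantCoeff_Dt_iter, constantCoeff_Dg_iter, map_mul, map_pow, constantCoeff_aeval,
    fp_constantCoeff β x hx, Polynomial.aeval_X_left_apply, ← PowerSeries.coeff_zero_eq_constantCoeff_apply,
    coeff_Dg, PowerSeries.coeff_zero_eq_constantCoeff_apply, fp_constantCoeff β x hx,
    Polynomial.derivative_X, mul_one] at h
  have h2 : ((m + 1).factorial : ℚ) • PowerSeries.coeff (m + 1) x
      = Polynomial.derivative^[m] (β ^ (m + 1)) := by
    rw [Nat.cast_smul_eq_nsmul, h]
  rw [Nat.add_sub_cancel, ← h2, smul_smul,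
    inv_mul_cancel₀ (by exact_mod_cast Nat.factorial_ne_zero (m + 1)), one_smul]

end FixedPoint

end Lagrange

/-- The fixed point equation `x = g + t·β(x)` (with `g` the polynomial variable, serving as a
formal parameter, and `t` the power series variable) has a unique formal power series solution
in `t`; its constant term is `g` and its higher coefficients are given by
`f_n(g)/n! = (d/dg)^(n-1)[β(g)^n]/n!`. -/
theorem fixed_point_equation_solution (β : Polynomial ℚ) :
    (∃! x : PowerSeries (Polynomial ℚ),
        x = PowerSeries.C Polynomial.X
              + PowerSeries.X * Polynomial.aeval x β)
    ∧ ∀ x : PowerSeries (Polynomial ℚ),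
        x = PowerSeries.C Polynomial.X
              + PowerSeries.X * Polynomial.aeval x β →
          PowerSeries.constantCoeff x = Polynomial.X ∧
          ∀ n : ℕ, 1 ≤ n →
            PowerSeries.coeff n x
              = (n.factorial : ℚ)⁻¹ • (Polynomial.derivative^[n - 1] (β ^ n)) := by
  constructor
  · exact ⟨fpSol β, fpSol_eq β, fun y hy => fp_unique β y (fpSol β) hy (fpSol_eq β)⟩
  · intro x hx
    exact ⟨fp_constantCoeff β x hx, fun n hn => fp_coeff β x hx n hn⟩
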